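/- Let F₂ = ⟨a,b⟩, H = ⟨b, ababa⟩, g = a, with h₁ = b, h₂ = ababa. For every non-zero integer i, the commutator [(h₂h₁)^i, x h₁] is a non-trivial element of I_g = ker φ_g of degree 2. Moreover I_g contains no non-trivial equation of degree 0 or 1, so the minimum degree of a non-trivial equation in I_g is 2. -/

import Mathlib

open Monoid
open scoped Monoid.Coprod
open scoped commutatorElement

/-- The generator `x` of the infinite cyclic group `⟨x⟩ = Multiplicative ℤ`. -/
def xgen : Multiplicative ℤ := Multiplicative.ofAdd 1

/-- An alternating expression `h₀ · x^{β₁} c₁ · x^{β₂} c₂ ⋯ x^{β_m} c_m` in `H ∗ ⟨x⟩`,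
recorded by the head coefficient `h₀` and the list `l = [(β₁,c₁),…,(β_m,c_m)]`. -/
def coprodExpr {H : Type*} [Group H] (h₀ : H) (l : List (ℤ × H)) : H ∗ Multiplicative ℤ :=
  Coprod.inl h₀ * (l.map fun p => Coprod.inr (xgen ^ p.1) * Coprod.inl p.2).prod

/-- The degree of an equation `w ∈ H ∗ ⟨x⟩`: the number of occurrences of `x` and `x⁻¹`
in the cyclic reduction of `w`.  Equivalently (and this is how we formalize it), it is the
minimum, over all elements conjugate to `w` and over all ways of writing such a conjugate as
an alternating expression `h₀ x^{β₁} c₁ ⋯ x^{β_m} c_m`, of the total number `∑ᵢ |βᵢ|` of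
occurrences of `x^{±1}`; this minimum is achieved exactly by the cyclic reduction of `w`. -/
noncomputable def degree {H : Type*} [Group H] (w : H ∗ Multiplicative ℤ) : ℕ :=
  sInf { n | ∃ (c : H ∗ Multiplicative ℤ) (h₀ : H) (l : List (ℤ × H)),
      c * w * c⁻¹ = coprodExpr h₀ l ∧ (l.map fun p => p.1.natAbs).sum = n }

-- Auxiliary material
@[ext] structure Heis where
  x : ℤ
  y : ℤ
  z : ℤ
  deriving DecidableEq

namespace Heis

instance : Mul Heis := ⟨fun g h => ⟨g.x + h.x, g.y + h.y, g.z + h.z + g.x * h.y⟩⟩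
instance : One Heis := ⟨⟨0, 0, 0⟩⟩
instance : Inv Heis := ⟨fun g => ⟨-g.x, -g.y, -g.z + g.x * g.y⟩⟩

@[simp] lemma mul_x (g h : Heis) : (g * h).x = g.x + h.x := rfl
@[simp] lemma mul_y (g h : Heis) : (g * h).y = g.y + h.y := rfl
@[simp] lemma mul_z (g h : Heis) : (g * h).z = g.z + h.z + g.x * h.y := rfl
@[simp] lemma one_x : (1 : Heis).x = 0 := rfl
@[simp] lemma one_y : (1 : Heis).y = 0 := rfl
@[simp] lemma one_z : (1 : Heis).z = 0 := rfl
@[simp] lemma inv_x (g : Heis) : g⁻¹.x = -g.x := rfl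
@[simp] lemma inv_y (g : Heis) : g⁻¹.y = -g.y := rfl
@[simp] lemma inv_z (g : Heis) : g⁻¹.z = -g.z + g.x * g.y := rfl

instance : Group Heis where
  mul_assoc g h k := by ext <;> simp <;> ring
  one_mul g := by ext <;> simp
  mul_one g := by ext <;> simp
  inv_mul_cancel g := by ext <;> simp <;> ring

lemma comm_eq (g h : Heis) : ⁅g, h⁆ = ⟨0, 0, g.x * h.y - g.y * h.x⟩ := by
  ext <;> simp [commutatorElement_def] <;> ring

/-- x-coordinate as a monoid hom. -/
def px : Heis →* Multiplicative ℤ where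
  toFun g := Multiplicative.ofAdd g.x
  map_one' := rfl
  map_mul' g h := by simp [← ofAdd_add]

/-- y-coordinate as a monoid hom. -/
def py : Heis →* Multiplicative ℤ where
  toFun g := Multiplicative.ofAdd g.y
  map_one' := rfl
  map_mul' g h := by simp [← ofAdd_add]

@[simp] lemma px_apply (g : Heis) : px g = Multiplicative.ofAdd g.x := rfl
@[simp] lemma py_apply (g : Heis) : py g = Multiplicative.ofAdd g.y := rfl

lemma zpow_x (g : Heis) (i : ℤ) : (g ^ i).x = i * g.x := by
  have := congrArg Multiplicative.toAdd (map_zpow px g i)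
  simpa [toAdd_zpow, smul_eq_mul] using this

lemma zpow_y (g : Heis) (i : ℤ) : (g ^ i).y = i * g.y := by
  have := congrArg Multiplicative.toAdd (map_zpow py g i)
  simpa [toAdd_zpow, smul_eq_mul] using this

end Heis
section CE
variable {H : Type*} [Group H]

lemma coprodExpr_nil (h₀ : H) : coprodExpr h₀ ([] : List (ℤ × H)) = Coprod.inl h₀ := by
  simp [coprodExpr]

lemma coprodExpr_cons (h₀ : H) (β : ℤ) (c : H) (t : List (ℤ × H)) :
    coprodExpr h₀ ((β, c) :: t) =
      Coprod.inl h₀ * Coprod.inr (xgen ^ β) * coprodExpr c t := by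
  simp [coprodExpr, mul_assoc]

lemma coprodExpr_mul (h₀ h₀' : H) (l l' : List (ℤ × H)) :
    coprodExpr h₀ l * coprodExpr h₀' l' = coprodExpr h₀ (l ++ (0, h₀') :: l') := by
  simp [coprodExpr, mul_assoc]

lemma coprodExpr_deg0 (h₀ : H) (l : List (ℤ × H))
    (h : (l.map fun p => p.1.natAbs).sum = 0) :
    coprodExpr h₀ l = Coprod.inl (h₀ * (l.map Prod.snd).prod) := by
  induction l generalizing h₀ with
  | nil => simp [coprodExpr]
  | cons p t ih =>
    obtain ⟨β, c⟩ := p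
    simp only [List.map_cons, List.sum_cons, Nat.add_eq_zero] at h
    obtain ⟨hβ, ht⟩ := h
    rw [Int.natAbs_eq_zero] at hβ
    subst hβ
    rw [coprodExpr_cons, ih c ht]
    simp [mul_assoc]

lemma coprodExpr_deg1 (h₀ : H) (l : List (ℤ × H))
    (h : (l.map fun p => p.1.natAbs).sum = 1) :
    ∃ (u v : H) (ε : ℤ), ε.natAbs = 1 ∧
      coprodExpr h₀ l = Coprod.inl u * Coprod.inr (xgen ^ ε) * Coprod.inl v := by
  induction l generalizing h₀ with
  | nil => simp at h
  | cons p t ih =>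
    obtain ⟨β, c⟩ := p
    simp only [List.map_cons, List.sum_cons] at h
    rcases Nat.le_one_iff_eq_zero_or_eq_one.mp (le_of_add_le_left h.le) with h0 | h1
    · rw [Int.natAbs_eq_zero] at h0
      subst h0
      rw [Int.natAbs_zero, zero_add] at h
      obtain ⟨u, v, ε, hε, hev⟩ := ih c h
      refine ⟨h₀ * u, v, ε, hε, ?_⟩
      rw [coprodExpr_cons, hev]
      simp [mul_assoc]
    · have ht : (t.map fun p => p.1.natAbs).sum = 0 := by omega
      refine ⟨h₀, c * (t.map Prod.snd).prod, β, h1, ?_⟩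
      rw [coprodExpr_cons, coprodExpr_deg0 c t ht, map_mul]

lemma xgen_zpow (k : ℤ) : xgen ^ k = Multiplicative.ofAdd k := by
  apply Multiplicative.toAdd.injective
  simp [xgen, toAdd_zpow]

lemma exists_coprodExpr (w : H ∗ Multiplicative ℤ) :
    ∃ (h₀ : H) (l : List (ℤ × H)), w = coprodExpr h₀ l := by
  induction w using Coprod.induction_on with
  | inl m => exact ⟨m, [], (coprodExpr_nil m).symm⟩
  | inr n =>
    refine ⟨1, [(Multiplicative.toAdd n, 1)], ?_⟩
    rw [coprodExpr_cons, coprodExpr_nil, xgen_zpow]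
    simp
  | mul x y hx hy =>
    obtain ⟨h₀, l, rfl⟩ := hx
    obtain ⟨h₀', l', rfl⟩ := hy
    exact ⟨h₀, l ++ (0, h₀') :: l', coprodExpr_mul h₀ h₀' l l'⟩

end CE

/-- the Heisenberg representation of the free group -/
def heisTheta : FreeGroup Bool →* Heis :=
  FreeGroup.lift (fun t => if t then ⟨1,0,0⟩ else ⟨0,1,0⟩)

def psiH (H : Subgroup (FreeGroup Bool)) : ↥H ∗ Multiplicative ℤ →* Heis :=
  Coprod.lift (heisTheta.comp H.subtype) (zpowersHom Heis ⟨0,0,1⟩)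



/-- in `F₂ = ⟨a,b⟩` with `h₁ = b`, `h₂ = ababa`, `H = ⟨h₁,h₂⟩`, `g = a`:
for every non-zero integer `i` the commutator `[(h₂h₁)^i, x h₁]` is a non-trivial element
of `I_g = ker φ_g` of degree 2; moreover `I_g` contains no non-trivial equation of
degree 0 or 1, so 2 is the minimum degree of a non-trivial equation in `I_g`. -/
theorem stmt11 (a b : FreeGroup Bool) (ha : a = FreeGroup.of true) (hb : b = FreeGroup.of false)
    (H : Subgroup (FreeGroup Bool)) (hHdef : H = Subgroup.closure {b, a * b * a * b * a})
    (h₁ h₂ : ↥H) (hh₁ : (h₁ : FreeGroup Bool) = b)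
    (hh₂ : (h₂ : FreeGroup Bool) = a * b * a * b * a)
    (φ : ↥H ∗ Multiplicative ℤ →* FreeGroup Bool)
    (hφ : φ = Coprod.lift H.subtype (zpowersHom (FreeGroup Bool) a)) :
    (∀ i : ℤ, i ≠ 0 → ∀ w : ↥H ∗ Multiplicative ℤ,
      w = ⁅(Coprod.inl ((h₂ * h₁) ^ i) : ↥H ∗ Multiplicative ℤ),
        (Coprod.inr xgen : ↥H ∗ Multiplicative ℤ) * Coprod.inl h₁⁆ →
      w ∈ φ.ker ∧ w ≠ 1 ∧ degree w = 2) ∧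
    (∀ w ∈ φ.ker, w ≠ 1 → 2 ≤ degree w) ∧
    IsLeast {d : ℕ | ∃ w ∈ φ.ker, w ≠ 1 ∧ degree w = d} 2 := by
  -- `a` is not in `H`, via the exponent-sum-of-`a` homomorphism
  have haH : a ∉ H := by
    intro hmem
    set χ : FreeGroup Bool →* Multiplicative ℤ :=
      FreeGroup.lift (fun t => Multiplicative.ofAdd (if t then (1:ℤ) else 0)) with hχ
    have hdvd : ∀ g ∈ H, (3:ℤ) ∣ Multiplicative.toAdd (χ g) := by
      rw [hHdef]
      intro g hg
      induction hg using Subgroup.closure_induction with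
      | mem x hx =>
        rcases hx with rfl | rfl
        · simp [hχ, hb, FreeGroup.lift_apply_of]
        · simp [hχ, ha, hb, map_mul, FreeGroup.lift_apply_of]
      | one => simp
      | mul x y _ _ hx hy =>
        rw [map_mul, toAdd_mul]
        exact dvd_add hx hy
      | inv x _ hx =>
        rw [map_inv, toAdd_inv]
        exact dvd_neg.mpr hx
    have h1 := hdvd a hmem
    rw [ha] at h1
    simp [hχ, FreeGroup.lift_apply_of] at h1
  -- φ on generators
  have hφinl : ∀ h : ↥H, φ (Coprod.inl h) = (h : FreeGroup Bool) := by
    intro h; rw [hφ, Coprod.lift_apply_inl]; rfl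
  have hφinr : ∀ k : ℤ, φ (Coprod.inr (xgen ^ k)) = a ^ k := by
    intro k
    rw [hφ, Coprod.lift_apply_inr, zpowersHom_apply, xgen_zpow]
    rfl
  -- key lower bound on members of the degree set
  have key : ∀ w ∈ φ.ker, w ≠ 1 → ∀ n : ℕ,
      (∃ (c : ↥H ∗ Multiplicative ℤ) (h₀ : ↥H) (l : List (ℤ × ↥H)),
        c * w * c⁻¹ = coprodExpr h₀ l ∧ (l.map fun p => p.1.natAbs).sum = n) → 2 ≤ n := by
    rintro w hw hw1 n ⟨c, h₀, l, hc, hs⟩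
    by_contra hlt
    push_neg at hlt
    interval_cases n
    · -- degree-0 expression: w would be trivial
      rw [coprodExpr_deg0 h₀ l hs] at hc
      have hφc : φ (c * w * c⁻¹) = 1 := by
        rw [map_mul, map_mul, map_inv, MonoidHom.mem_ker.mp hw, mul_one, mul_inv_cancel]
      rw [hc, hφinl] at hφc
      have : h₀ * (l.map Prod.snd).prod = 1 := by exact_mod_cast hφc
      rw [this, map_one] at hc
      exact hw1 (by simpa [mul_assoc] using congrArg (fun t => c⁻¹ * t * c) hc)
    · -- degree-1 expression: would give a ∈ H
      obtain ⟨u, v, ε, hε, hev⟩ := coprodExpr_deg1 h₀ l hs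
      rw [hev] at hc
      have hφc : φ (c * w * c⁻¹) = 1 := by
        rw [map_mul, map_mul, map_inv, MonoidHom.mem_ker.mp hw, mul_one, mul_inv_cancel]
      rw [hc, map_mul, map_mul, hφinl, hφinl, hφinr] at hφc
      have haε : a ^ ε ∈ H := by
        have h2 : (↑u : FreeGroup Bool) * a ^ ε * (↑v : FreeGroup Bool) = 1 := by
          simpa [mul_assoc] using hφc
        have h3 : a ^ ε = (↑u : FreeGroup Bool)⁻¹ * (↑v : FreeGroup Bool)⁻¹ := by
          calc a ^ ε = (↑u)⁻¹ * ((↑u : FreeGroup Bool) * a ^ ε * ↑v) * (↑v)⁻¹ := by group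
          _ = (↑u)⁻¹ * 1 * (↑v)⁻¹ := by rw [h2]
          _ = (↑u)⁻¹ * (↑v)⁻¹ := by group
        rw [h3]
        exact mul_mem (inv_mem u.2) (inv_mem v.2)
      rcases Int.natAbs_eq_iff.mp hε with rfl | rfl
      · exact haH (by simpa using haε)
      · exact haH (by simpa using inv_mem haε)
  -- degree lower bound for nontrivial kernel elements
  have deg_ge : ∀ w ∈ φ.ker, w ≠ 1 → 2 ≤ degree w := by
    intro w hw hw1
    have hne : {n | ∃ (c : ↥H ∗ Multiplicative ℤ) (h₀ : ↥H) (l : List (ℤ × ↥H)),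
        c * w * c⁻¹ = coprodExpr h₀ l ∧ (l.map fun p => p.1.natAbs).sum = n}.Nonempty := by
      obtain ⟨h₀, l, hl⟩ := exists_coprodExpr w
      exact ⟨_, 1, h₀, l, by simpa using hl, rfl⟩
    unfold degree
    exact key w hw hw1 _ (Nat.sInf_mem hne)
  have part1 : ∀ i : ℤ, i ≠ 0 → ∀ w : ↥H ∗ Multiplicative ℤ,
      w = ⁅(Coprod.inl ((h₂ * h₁) ^ i) : ↥H ∗ Multiplicative ℤ),
        (Coprod.inr xgen : ↥H ∗ Multiplicative ℤ) * Coprod.inl h₁⁆ →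
      w ∈ φ.ker ∧ w ≠ 1 ∧ degree w = 2 := by
    intro i hi w hwdef
    set k : ↥H := (h₂ * h₁) ^ i with hk
    have hcoe : ((k : ↥H) : FreeGroup Bool) = ((a * b) ^ 3) ^ i := by
      rw [hk, SubgroupClass.coe_zpow]
      congr 1
      rw [Subgroup.coe_mul, hh₁, hh₂]
      simp [pow_succ, mul_assoc]
    have hφxgen : φ (Coprod.inr xgen) = a := by simpa using hφinr 1
    have hker : w ∈ φ.ker := by
      rw [MonoidHom.mem_ker, hwdef, map_commutatorElement, map_mul, hφinl, hφinl, hφxgen,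
        hcoe, hh₁]
      exact commutatorElement_eq_one_iff_commute.mpr
        (((Commute.refl (a * b)).pow_left 3).zpow_left i)
    have hA : heisTheta ((a * b) ^ 3) = (⟨3, 3, 6⟩ : Heis) := by
      rw [ha, hb, map_pow, map_mul]
      simp only [heisTheta, FreeGroup.lift_apply_of, if_true, if_false, Bool.false_eq_true]
      decide
    have hne1 : w ≠ 1 := by
      intro hw1
      have hψ : psiH H w = 1 := by rw [hw1, map_one]
      have e1 : psiH H (Coprod.inl k) = (⟨3, 3, 6⟩ : Heis) ^ i := by
        rw [psiH, Coprod.lift_apply_inl, MonoidHom.comp_apply]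
        rw [show H.subtype k = ((a * b) ^ 3) ^ i from hcoe, map_zpow, hA]
      have e2 : psiH H (Coprod.inr xgen) = (⟨0, 0, 1⟩ : Heis) := by
        rw [psiH, Coprod.lift_apply_inr, zpowersHom_apply]
        simp [xgen]
      have e3 : psiH H (Coprod.inl h₁) = (⟨0, 1, 0⟩ : Heis) := by
        rw [psiH, Coprod.lift_apply_inl, MonoidHom.comp_apply]
        rw [show H.subtype h₁ = b from hh₁, hb]
        simp [heisTheta, FreeGroup.lift_apply_of]
      rw [hwdef, map_commutatorElement, map_mul, e1, e2, e3, Heis.comm_eq] at hψ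
      have hz := congrArg Heis.z hψ
      simp [Heis.zpow_x, Heis.zpow_y] at hz
      omega
    refine ⟨hker, hne1, ?_⟩
    have mem2 : 2 ∈ {n | ∃ (c : ↥H ∗ Multiplicative ℤ) (h₀ : ↥H) (l : List (ℤ × ↥H)),
        c * w * c⁻¹ = coprodExpr h₀ l ∧ (l.map fun p => p.1.natAbs).sum = n} := by
      refine ⟨Coprod.inl k⁻¹, 1, [(1, h₁ * k⁻¹ * h₁⁻¹), (-1, k)], ?_, by simp⟩
      rw [coprodExpr_cons, coprodExpr_cons, coprodExpr_nil, hwdef]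
      simp only [map_mul, map_inv, map_zpow, map_one, commutatorElement_def]
      group
    refine le_antisymm ?_ (deg_ge w hker hne1)
    unfold degree
    exact Nat.sInf_le mem2
  refine ⟨part1, deg_ge, ?_, ?_⟩
  · obtain ⟨hker, hne, hdeg⟩ := part1 1 one_ne_zero _ rfl
    exact ⟨_, hker, hne, hdeg⟩
  · rintro d ⟨w, hker, hne, rfl⟩
    exact deg_ge w hker hne
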